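/- Let n ≥ 7 and let l be the largest prime with l < n. If x is an l-cycle in the alternating group Alt(n), then the conjugacy class of x in Sym(n) has size n!/(l·(n−l)!), and the conjugacy class size of x in Alt(n) is divisible by 4 and by every prime divisor of |Alt(n)| other than l. -/

import Mathlib

open MulAction Subgroup Equiv Equiv.Perm

/-- `x` is a vanishing element of `G`: some irreducible complex character of `G`
(character of a simple finite-dimensional complex representation) vanishes at `x`. -/
def IsVanishing (G : Type) [Group G] (x : G) : Prop :=
  ∃ V : FDRep ℂ G, CategoryTheory.Simple V ∧ V.character x = 0

/-- The size of the conjugacy class of `x`. -/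
noncomputable def classSize {G : Type*} [Group G] (x : G) : ℕ :=
  Nat.card {y : G // IsConj x y}

/-- `x` has prime power order. -/
def HasPrimePowerOrder {G : Type*} [Group G] (x : G) : Prop :=
  ∃ p k : ℕ, p.Prime ∧ orderOf x = p ^ k

private lemma memstab {G : Type*} [Group G] {x g : G} :
    ConjAct.toConjAct g ∈ stabilizer (ConjAct G) x ↔ g * x = x * g := by
  rw [mem_stabilizer_iff, ConjAct.toConjAct_smul, mul_inv_eq_iff_eq_mul]

private lemma lemA {G : Type*} [Group G] [Fintype G] (x : G) :
    classSize x * Nat.card (centralizer {x} : Subgroup G) = Nat.card G := by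
  classical
  have e1 : {y : G // IsConj x y} ≃ orbit (ConjAct G) x :=
    Equiv.subtypeEquivRight (fun y => by rw [ConjAct.mem_orbit_conjAct, isConj_comm])
  have e2 : (centralizer {x} : Subgroup G) ≃ stabilizer (ConjAct G) x := by
    refine ⟨fun g => ⟨ConjAct.toConjAct (g : G), ?_⟩,
      fun g => ⟨ConjAct.ofConjAct (g : ConjAct G), ?_⟩,
      fun g => by simp, fun g => by simp⟩
    · exact memstab.2 (mem_centralizer_singleton_iff.1 g.2)
    · refine mem_centralizer_singleton_iff.2 (memstab.1 ?_)
      simpa using g.2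
  rw [classSize, Nat.card_congr e1, Nat.card_congr e2]
  simp only [Nat.card_eq_fintype_card]
  exact card_orbit_mul_card_stabilizer_eq_card_group (ConjAct G) x

section cyc

variable {α : Type*} [Fintype α] [DecidableEq α]

private lemma ofSubtype_support_disjoint (c : Perm α) (σ : Perm {a : α // a ∉ c.support}) :
    Equiv.Perm.Disjoint (ofSubtype σ) c := by
  intro a
  by_cases ha : a ∈ c.support
  · exact Or.inl (ofSubtype_apply_of_not_mem σ (by simpa using ha))
  · exact Or.inr (by simpa using ha)

private lemma centralizer_cycle_equiv {c : Perm α} (hc : c.IsCycle) :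
    Function.Bijective (fun zs : (zpowers c) × Perm {a : α // a ∉ c.support} =>
      (⟨(zs.1 : Perm α) * ofSubtype zs.2, by
        rcases zs with ⟨⟨z, hz⟩, σ⟩
        rw [mem_centralizer_singleton_iff]
        obtain ⟨k, rfl⟩ := hz
        have h1 : Commute (c ^ k) c := (Commute.refl c).zpow_left k
        have h2 : Commute (ofSubtype σ) c := (ofSubtype_support_disjoint c σ).commute
        exact (h1.mul_left h2).eq⟩ :
        (centralizer {c} : Subgroup (Perm α)))) := by
  constructor
  · rintro ⟨⟨z, hz⟩, σ⟩ ⟨⟨w, hw⟩, τ⟩ h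
    simp only [Subtype.mk.injEq] at h
    have hzw : z = w := by
      ext a
      by_cases ha : a ∈ c.support
      · have h1 : ofSubtype σ a = a := ofSubtype_apply_of_not_mem σ (by simpa using ha)
        have h2 : ofSubtype τ a = a := ofSubtype_apply_of_not_mem τ (by simpa using ha)
        have := congrFun (congrArg (fun p : Perm α => (p : α → α)) h) a
        simpa [h1, h2] using this
      · obtain ⟨k, rfl⟩ := hz
        obtain ⟨j, rfl⟩ := hw
        rw [notMem_support.1 (fun hmem => ha (support_zpow_le c k hmem)),
          notMem_support.1 (fun hmem => ha (support_zpow_le c j hmem))]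
    subst hzw
    have hστ : ofSubtype σ = ofSubtype τ := mul_left_cancel h
    ext1
    · rfl
    · ext a
      have h2 : ((σ a : α)) = τ a := by
        rw [← ofSubtype_apply_coe σ a, ← ofSubtype_apply_coe τ a, hστ]
      exact h2
  · rintro ⟨g, hg⟩
    have hcomm : Commute g c := mem_centralizer_singleton_iff.1 hg
    obtain ⟨hc', hz⟩ := (hc.commute_iff (g := g)).1 hcomm
    set z : Perm α := ofSubtype (subtypePerm g hc') with hzdef
    have hc'' : ∀ a : α, g a ∉ c.support ↔ a ∉ c.support := fun a => not_iff_not.2 (hc' a)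
    refine ⟨⟨⟨z, hz⟩, subtypePerm g hc''⟩, ?_⟩
    ext a
    simp only [Subgroup.coe_mul, Equiv.Perm.coe_mul, Function.comp_apply]
    by_cases ha : a ∈ c.support
    · have h1 : ofSubtype (subtypePerm (p := fun a => a ∉ c.support) g hc'') a = a :=
        ofSubtype_apply_of_not_mem _ (by simpa using ha)
      rw [h1, hzdef, ofSubtype_apply_of_mem _ ha, subtypePerm_apply]
    · have h1 : ofSubtype (subtypePerm g hc'') a = g a :=
        ofSubtype_apply_of_mem (p := fun a => a ∉ c.support) _ ha
      rw [h1, hzdef, ofSubtype_apply_of_not_mem _ (by simpa using (hc'' a).2 ha)]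

private lemma card_centralizer_cycle {c : Perm α} (hc : c.IsCycle) :
    Nat.card (centralizer {c} : Subgroup (Perm α)) =
      c.support.card * (Fintype.card α - c.support.card).factorial := by
  classical
  rw [← Nat.card_congr (Equiv.ofBijective _ (centralizer_cycle_equiv hc))]
  rw [Nat.card_prod, Nat.card_eq_fintype_card, Nat.card_eq_fintype_card,
    Fintype.card_zpowers, hc.orderOf, Fintype.card_perm]
  congr 2
  rw [Fintype.card_subtype_compl]
  congr 1
  exact Fintype.card_coe _

end cyc

theorem stmt_8 (n l : ℕ) (hn : 7 ≤ n) (hl : l.Prime) (hln : l < n)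
    (hmax : ∀ r : ℕ, r.Prime → r < n → r ≤ l)
    (x : alternatingGroup (Fin n))
    (hcyc : (x : Equiv.Perm (Fin n)).IsCycle)
    (hsupp : (x : Equiv.Perm (Fin n)).support.card = l) :
    classSize (x : Equiv.Perm (Fin n)) = n.factorial / (l * (n - l).factorial) ∧
    4 ∣ classSize x ∧
    ∀ r : ℕ, r.Prime → r ∣ Nat.card (alternatingGroup (Fin n)) → r ≠ l →
      r ∣ classSize x := by
  classical
  set c : Perm (Fin n) := (x : Perm (Fin n)) with hc
  have hl5 : 5 ≤ l := hmax 5 (by norm_num) (by omega)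
  have hlodd : Odd l := hl.odd_of_ne_two (by omega)
  have hsign : Perm.sign c = 1 := mem_alternatingGroup.1 x.2
  have hcard : Fintype.card (Fin n) = n := Fintype.card_fin n
  have hpos : 0 < l * (n - l).factorial := Nat.mul_pos (by omega) (Nat.factorial_pos _)
  have hcent : Nat.card (centralizer {c} : Subgroup (Perm (Fin n)))
      = l * (n - l).factorial := by
    rw [card_centralizer_cycle hcyc, hsupp, hcard]
  have hG : Nat.card (Perm (Fin n)) = n.factorial := by
    rw [Nat.card_eq_fintype_card, Fintype.card_perm, hcard]
  have hEq1 : classSize c * (l * (n - l).factorial) = n.factorial := by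
    have := lemA c
    rwa [hcent, hG] at this
  have part1 : classSize c = n.factorial / (l * (n - l).factorial) :=
    (Nat.div_eq_of_eq_mul_left hpos hEq1.symm).symm
  refine ⟨part1, ?_⟩
  -- sign of conjugates
  have hsign' : ∀ y : Perm (Fin n), IsConj c y → Perm.sign y = 1 := by
    intro y h
    obtain ⟨z, hz⟩ := isConj_iff.1 h
    rw [← hz]
    simp [hsign]
  haveI : Nontrivial (Fin n) := ⟨⟨⟨0, by omega⟩, ⟨1, by omega⟩, by simp [Fin.ext_iff]⟩⟩
  by_cases hcase : l + 2 ≤ n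
  · -- no splitting: class in Alt equals class in Sym
    have e : {y : alternatingGroup (Fin n) // IsConj x y} ≃ {y : Perm (Fin n) // IsConj c y} := by
      refine ⟨fun y => ⟨(y.1 : Perm (Fin n)), ?_⟩, fun y =>
        ⟨⟨y.1, mem_alternatingGroup.2 ?_⟩, ?_⟩, fun y => by ext; rfl, fun y => by ext; rfl⟩
      · obtain ⟨z, hz⟩ := isConj_iff.1 y.2
        refine isConj_iff.2 ⟨(z : Perm (Fin n)), ?_⟩
        have := congrArg (Subtype.val) hz
        simpa using this
      · exact hsign' y.1 y.2
      · refine alternatingGroup.isConj_of y.2 ?_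
        rw [hsupp, hcard]; exact hcase
    have hk : classSize x = classSize c := Nat.card_congr e
    have key : classSize x = n.choose l * (l - 1).factorial := by
      have hfac : n.factorial = n.choose l * l.factorial * (n - l).factorial :=
        (Nat.choose_mul_factorial_mul_factorial hln.le).symm
      have hlf : l.factorial = l * (l - 1).factorial := by
        rw [← Nat.mul_factorial_pred (by omega)]
      refine Nat.eq_of_mul_eq_mul_right hpos ?_
      rw [hk, hEq1, hfac, hlf]
      ring
    constructor
    · rw [key]
      exact Dvd.dvd.mul_left (Nat.dvd_factorial (by norm_num) (by omega)) _
    · intro r hr hrA hrl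
      have hrn : r ≤ n := by
        have h2 : 2 * Nat.card (alternatingGroup (Fin n)) = n.factorial := by
          have := two_mul_card_alternatingGroup (α := Fin n)
          rwa [← Nat.card_eq_fintype_card, ← Nat.card_eq_fintype_card, hG] at this
        have : r ∣ n.factorial := h2 ▸ (hrA.mul_left 2)
        exact (Nat.Prime.dvd_factorial hr).1 this
      rw [key]
      rcases eq_or_lt_of_le hrn with h | h
      · subst h
        exact Dvd.dvd.mul_right (Nat.Prime.dvd_choose_self hr (by omega) hln) _
      · have : r ≤ l := hmax r hr h
        exact Dvd.dvd.mul_left (Nat.dvd_factorial hr.pos (by omega)) _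
  · -- splitting case: l = n - 1
    have hln1 : l = n - 1 := by omega
    have hcompl : Fintype.card {a : Fin n // a ∉ c.support} = 1 := by
      rw [Fintype.card_subtype_compl]
      have : Fintype.card {a : Fin n // a ∈ c.support} = l := by
        rw [← hsupp]; exact Fintype.card_coe _
      omega
    have hsub : Subsingleton (Perm {a : Fin n // a ∉ c.support}) := by
      have h1 : Subsingleton {a : Fin n // a ∉ c.support} :=
        Fintype.card_le_one_iff_subsingleton.1 (by omega)
      exact ⟨fun σ τ => Equiv.ext fun a => Subsingleton.elim _ _⟩
    have heven : ∀ g : Perm (Fin n), g ∈ centralizer {c} → Perm.sign g = 1 := by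
      intro g hg
      obtain ⟨⟨⟨z, hz⟩, σ⟩, hgdec⟩ := (centralizer_cycle_equiv hcyc).2 ⟨g, hg⟩
      have hg' : z * ofSubtype σ = g := congrArg Subtype.val hgdec
      have hσ : σ = 1 := Subsingleton.elim _ _
      rw [hσ, map_one, mul_one] at hg'
      obtain ⟨k, rfl⟩ := hz
      rw [← hg', map_zpow, hsign, one_zpow]
    have e2 : (centralizer {x} : Subgroup (alternatingGroup (Fin n))) ≃
        (centralizer {c} : Subgroup (Perm (Fin n))) := by
      refine ⟨fun g => ⟨((g : alternatingGroup (Fin n)) : Perm (Fin n)), ?_⟩,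
        fun g => ⟨⟨((g : Perm (Fin n))), mem_alternatingGroup.2 (heven (g : Perm (Fin n)) g.2)⟩, ?_⟩,
        fun g => by ext; rfl, fun g => by ext; rfl⟩
      · have := mem_centralizer_singleton_iff.1 g.2
        refine mem_centralizer_singleton_iff.2 ?_
        have := congrArg (Subtype.val) this
        simpa using this
      · refine mem_centralizer_singleton_iff.2 (Subtype.ext ?_)
        simpa using mem_centralizer_singleton_iff.1 g.2
    have hA2 : 2 * Nat.card (alternatingGroup (Fin n)) = n.factorial := by
      have := two_mul_card_alternatingGroup (α := Fin n)
      rwa [← Nat.card_eq_fintype_card, ← Nat.card_eq_fintype_card, hG] at this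
    have hcA : Nat.card (centralizer {x} : Subgroup (alternatingGroup (Fin n))) = l := by
      rw [Nat.card_congr e2, hcent]
      have : n - l = 1 := by omega
      rw [this, Nat.factorial_one, mul_one]
    have hEq2 : classSize x * l = Nat.card (alternatingGroup (Fin n)) := by
      have := lemA x
      rwa [hcA] at this
    obtain ⟨t, ht⟩ := hlodd
    have hnev : n = 2 * (t + 1) := by omega
    set m := t + 1 with hm
    have hfac2 : n.factorial = n * (l * (n - 2).factorial) := by
      have h1 : n.factorial = n * (n - 1).factorial := by
        rw [Nat.mul_factorial_pred (by omega)]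
      have h2 : (n - 1).factorial = (n - 1) * (n - 2).factorial := by
        rw [← Nat.mul_factorial_pred (n := n - 1) (by omega)]
        congr 2
      rw [h1, h2, hln1]
    have key : classSize x = m * (n - 2).factorial := by
      have h3 : 2 * (classSize x * l) = 2 * ((m * (n - 2).factorial) * l) := by
        rw [hEq2, hA2, hfac2, hnev]
        ring
      have h4 := Nat.eq_of_mul_eq_mul_left (by norm_num : 0 < 2) h3
      exact Nat.eq_of_mul_eq_mul_right (by omega) h4
    constructor
    · rw [key]
      exact Dvd.dvd.mul_left (Nat.dvd_factorial (by norm_num) (by omega)) _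
    · intro r hr hrA hrl
      have hrn : r ≤ n := by
        have : r ∣ n.factorial := hA2 ▸ (hrA.mul_left 2)
        exact (Nat.Prime.dvd_factorial hr).1 this
      have hrn2 : r ≤ n - 2 := by
        rcases eq_or_lt_of_le hrn with h | h
        · exfalso
          have : Even r := by rw [h]; exact ⟨t + 1, by omega⟩
          have := (Nat.Prime.even_iff hr).1 this
          omega
        · have := hmax r hr h
          omega
      rw [key]
      exact Dvd.dvd.mul_left (Nat.dvd_factorial hr.pos hrn2) _
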